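/- The relation on suffixes of the collection defined by the conditions of the two comparison lemmas (comparison by insert point first, then by (length, side-indicator, mismatch character) as specified) is a strict partial order, and the lexicographic order on suffixes is a refinement of it: whenever the partial order declares S_d[i..] below S_{d′}[i′..], also S_d[i..] < S_{d′}[i′..] lexicographically. -/

import Mathlib

open List

/-- `MFactor R SA suf U c ip`: `U` is the matching factor of the suffix `suf`
w.r.t. `R` (the longest prefix of `suf` occurring in `R`), `c` is the mismatch
character (the character of `suf` following `U`), and `ip` is the insert point
of `suf` in the suffix array `SA` of `R`: the greatest rank `j` such that `U`
occurs at `SA j` and `R[SA j..] < Uc`, if such a rank exists, and otherwise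
the least rank `j` such that `U` occurs at `SA j`. -/
def MFactor {α : Type*} [LinearOrder α] (R : List α) (SA : ℕ → ℕ)
    (suf U : List α) (c : α) (ip : ℕ) : Prop :=
  (∃ V, suf = U ++ c :: V) ∧ U <:+: R ∧ ¬ ((U ++ [c]) <:+: R) ∧
  (IsGreatest {j | j < R.length ∧ U <+: R.drop (SA j) ∧
      List.Lex (· < ·) (R.drop (SA j)) (U ++ [c])} ip ∨
   ((∀ j, j < R.length → U <+: R.drop (SA j) →
      ¬ List.Lex (· < ·) (R.drop (SA j)) (U ++ [c])) ∧
    IsLeast {j | j < R.length ∧ U <+: R.drop (SA j)} ip))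

/-- The comparison relation of the two lemmas: first by insert point, then
(at equal insert points) by the four tie-breaking conditions on
(matching-factor length, side indicator, mismatch character). -/
def Prec {α : Type*} [LinearOrder α] {ι : Type*}
    (U : ι → List α) (c : ι → α) (ip : ι → ℕ) (xS : ι → Prop) (a b : ι) : Prop :=
  ip a < ip b ∨
  (ip a = ip b ∧
    (((U a).length < (U b).length ∧ xS a) ∨
     ((U b).length < (U a).length ∧ ¬ xS b) ∨
     ((U a).length = (U b).length ∧ xS a ∧ ¬ xS b) ∨
     ((U a).length = (U b).length ∧ (xS a ↔ xS b) ∧ c a < c b)))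

section Aux
variable {α : Type*} [LinearOrder α]

private lemma lex_trans' : ∀ {X Y Z : List α},
    List.Lex (· < ·) X Y → List.Lex (· < ·) Y Z → List.Lex (· < ·) X Z := by
  intro X Y Z h1 h2
  induction h2 generalizing X with
  | nil => cases h1
  | @cons a l₂ l₃ h ih =>
    cases h1 with
    | nil => exact Lex.nil
    | cons h1 => exact Lex.cons (ih h1)
    | rel h1 => exact Lex.rel h1
  | @rel a₂ l₂ a₃ l₃ hr =>
    cases h1 with
    | nil => exact Lex.nil
    | cons h1 => exact Lex.rel hr
    | rel h1 => exact Lex.rel (lt_trans h1 hr)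

private lemma lex_irrefl' (X : List α) : ¬ List.Lex (· < ·) X X := fun h =>
  (List.Lex.to_ne (List.Lex.imp (fun _ _ h => ne_of_lt h) _ _ h)) rfl

private lemma lex_asymm' {X Y : List α} (h : List.Lex (· < ·) X Y) :
    ¬ List.Lex (· < ·) Y X := fun h' => lex_irrefl' X (lex_trans' h h')

private lemma lex_trich' (X Y : List α) :
    List.Lex (· < ·) X Y ∨ X = Y ∨ List.Lex (· < ·) Y X :=
  trichotomous_of (List.Lex (· < ·)) X Y

private lemma lex_prefix' {X t : List α} (ht : t ≠ []) : List.Lex (· < ·) X (X ++ t) := by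
  induction X with
  | nil =>
    cases t with
    | nil => exact absurd rfl ht
    | cons a t => exact List.Lex.nil
  | cons a X ih => exact List.Lex.cons ih

private lemma lex_append_left_iff' {P X Y : List α} :
    List.Lex (· < ·) (P ++ X) (P ++ Y) ↔ List.Lex (· < ·) X Y := by
  induction P with
  | nil => rfl
  | cons a P ih => exact List.lex_cons_iff.trans ih

private lemma lex_decomp {X Y : List α} (h : List.Lex (· < ·) X Y) :
    X <+: Y ∨ ∃ P x y X' Y', x < y ∧ X = P ++ x :: X' ∧ Y = P ++ y :: Y' := by
  induction h with
  | @nil a l => exact Or.inl (List.nil_prefix)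
  | @cons a X Y h ih =>
    rcases ih with h1 | ⟨P, x, y, X', Y', hxy, rfl, rfl⟩
    · obtain ⟨t, rfl⟩ := h1
      exact Or.inl ⟨t, rfl⟩
    · exact Or.inr ⟨a :: P, x, y, X', Y', hxy, rfl, rfl⟩
  | @rel x X' y Y' hxy => exact Or.inr ⟨[], x, y, X', Y', hxy, rfl, rfl⟩

private lemma keyA {X Y P Z : List α} (h1 : List.Lex (· < ·) X Y) (h2 : P <+: Y)
    (h3 : ¬ P <+: X) : List.Lex (· < ·) X (P ++ Z) := by
  rcases lex_decomp h1 with hp | ⟨Q, x, y, X', Y', hxy, rfl, rfl⟩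
  · rcases le_or_gt P.length X.length with hl | hl
    · exact absurd (List.prefix_of_prefix_length_le h2 hp hl) h3
    · have hXP : X <+: P := List.prefix_of_prefix_length_le hp h2 (le_of_lt hl)
      obtain ⟨t, rfl⟩ := hXP
      have ht : t ≠ [] := by
        rintro rfl
        simp only [List.append_nil] at hl
        omega
      rw [List.append_assoc]
      exact lex_prefix' (by simp [ht])
  · rcases le_or_gt P.length Q.length with hl | hl
    · exact absurd ((List.prefix_of_prefix_length_le h2 ⟨y :: Y', rfl⟩ hl).trans
        ⟨x :: X', rfl⟩) h3
    · have h4 : Q ++ [y] <+: P := by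
        refine List.prefix_of_prefix_length_le ?_ h2 ?_
        · exact ⟨Y', by simp⟩
        · simp only [List.length_append, List.length_singleton]; omega
      obtain ⟨t, rfl⟩ := h4
      have : (Q ++ [y] ++ t) ++ Z = Q ++ (y :: (t ++ Z)) := by simp
      rw [this]
      exact lex_append_left_iff'.mpr (List.Lex.rel hxy)

private lemma keyB {X Y P Z : List α} (h0 : P <+: X) (h1 : List.Lex (· < ·) X Y)
    (h2 : ¬ P <+: Y) : List.Lex (· < ·) (P ++ Z) Y := by
  rcases lex_decomp h1 with hp | ⟨Q, x, y, X', Y', hxy, rfl, rfl⟩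
  · exact absurd (h0.trans hp) h2
  · rcases le_or_gt P.length Q.length with hl | hl
    · exact absurd ((List.prefix_of_prefix_length_le h0 ⟨x :: X', rfl⟩ hl).trans
        ⟨y :: Y', rfl⟩) h2
    · have h4 : Q ++ [x] <+: P := by
        refine List.prefix_of_prefix_length_le ?_ h0 ?_
        · exact ⟨X', by simp⟩
        · simp only [List.length_append, List.length_singleton]; omega
      obtain ⟨t, rfl⟩ := h4
      have : (Q ++ [x] ++ t) ++ Z = Q ++ (x :: (t ++ Z)) := by simp
      rw [this]
      exact lex_append_left_iff'.mpr (List.Lex.rel hxy)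

private lemma keyE {X Y u v : List α} (h : List.Lex (· < ·) X Y) (h2 : ¬ X <+: Y) :
    List.Lex (· < ·) (X ++ u) (Y ++ v) := by
  rcases lex_decomp h with hp | ⟨Q, x, y, X', Y', hxy, rfl, rfl⟩
  · exact absurd hp h2
  · have e1 : (Q ++ x :: X') ++ u = Q ++ (x :: (X' ++ u)) := by simp
    have e2 : (Q ++ y :: Y') ++ v = Q ++ (y :: (Y' ++ v)) := by simp
    rw [e1, e2]
    exact lex_append_left_iff'.mpr (List.Lex.rel hxy)

end Aux

private lemma pos_lemma {α : Type*} [LinearOrder α] {R : List α} {SA : ℕ → ℕ}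
    (hsort : ∀ r r', r < r' → r' < R.length →
      List.Lex (· < ·) (R.drop (SA r)) (R.drop (SA r')))
    {suf Ua : List α} {ca : α} {ipa : ℕ} (hmf : MFactor R SA suf Ua ca ipa) :
    ipa < R.length ∧ Ua <+: R.drop (SA ipa) ∧
      (∀ j, j < ipa → List.Lex (· < ·) (R.drop (SA j)) (Ua ++ [ca])) ∧
      (∀ j, ipa < j → j < R.length → List.Lex (· < ·) (Ua ++ [ca]) (R.drop (SA j))) := by
  obtain ⟨-, hUinf, hEinf, hcase⟩ := hmf
  have hnp : ∀ t, ¬ (Ua ++ [ca]) <+: R.drop t := fun t h =>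
    hEinf (h.isInfix.trans (List.drop_suffix t R).isInfix)
  have hne : ∀ t, R.drop t ≠ Ua ++ [ca] := fun t h => hnp t (h ▸ List.prefix_refl _)
  rcases hcase with hG | ⟨hnone, hL⟩
  · obtain ⟨h1, h2, h3⟩ := hG.1
    refine ⟨h1, h2, fun j hj => lex_trans' (hsort j ipa hj h1) h3, fun j hj1 hj2 => ?_⟩
    by_cases hp : Ua <+: R.drop (SA j)
    · have hnlt : ¬ List.Lex (· < ·) (R.drop (SA j)) (Ua ++ [ca]) := fun hlt =>
        absurd (hG.2 ⟨hj2, hp, hlt⟩) (by omega)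
      rcases lex_trich' (Ua ++ [ca]) (R.drop (SA j)) with h | h | h
      · exact h
      · exact absurd h.symm (hne _)
      · exact absurd h hnlt
    · exact keyB h2 (hsort ipa j hj1 hj2) hp
  · obtain ⟨h1, h2⟩ := hL.1
    refine ⟨h1, h2, fun j hj => ?_, fun j hj1 hj2 => ?_⟩
    · have hp : ¬ Ua <+: R.drop (SA j) := fun hp =>
        absurd (hL.2 ⟨lt_trans hj h1, hp⟩) (by omega)
      exact keyA (hsort j ipa hj h1) h2 hp
    · by_cases hp : Ua <+: R.drop (SA j)
      · rcases lex_trich' (Ua ++ [ca]) (R.drop (SA j)) with h | h | h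
        · exact h
        · exact absurd h.symm (hne _)
        · exact absurd h (hnone j hj2 hp)
      · exact keyB h2 (hsort ipa j hj1 hj2) hp

/-- The relation `Prec` is a strict partial order on the suffixes of the
collection, and the lexicographic order refines it. -/
theorem stmt15 {α : Type*} [LinearOrder α] {ι : Type*} (R : List α) (SA : ℕ → ℕ)
    (hbij : Set.BijOn SA (Set.Iio R.length) (Set.Iio R.length))
    (hsort : ∀ r r', r < r' → r' < R.length →
      List.Lex (· < ·) (R.drop (SA r)) (R.drop (SA r')))
    (suf : ι → List α) (U : ι → List α) (c : ι → α) (ip : ι → ℕ) (xS : ι → Prop)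
    (hmf : ∀ a, MFactor R SA (suf a) (U a) (c a) (ip a))
    (hx : ∀ a, xS a ↔ List.Lex (· < ·) (U a ++ [c a]) (R.drop (SA (ip a)))) :
    (∀ a, ¬ Prec U c ip xS a a) ∧
    (∀ a b d, Prec U c ip xS a b → Prec U c ip xS b d → Prec U c ip xS a d) ∧
    (∀ a b, Prec U c ip xS a b → List.Lex (· < ·) (suf a) (suf b)) := by
  have hnpE : ∀ a (t : ℕ), ¬ (U a ++ [c a]) <+: R.drop t := fun a t h =>
    (hmf a).2.2.1 (h.isInfix.trans (List.drop_suffix t R).isInfix)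
  have hneE : ∀ a (t : ℕ), R.drop t ≠ U a ++ [c a] := fun a t h =>
    hnpE a t (h ▸ List.prefix_refl _)
  have hpos := fun a => pos_lemma hsort (hmf a)
  have hmidL : ∀ a, ¬ xS a →
      List.Lex (· < ·) (R.drop (SA (ip a))) (U a ++ [c a]) := by
    intro a h
    rcases lex_trich' (R.drop (SA (ip a))) (U a ++ [c a]) with h' | h' | h'
    · exact h'
    · exact absurd h' (hneE a _)
    · exact absurd ((hx a).mpr h') h
  have hmain : ∀ a b, Prec U c ip xS a b →
      List.Lex (· < ·) (U a ++ [c a]) (U b ++ [c b]) := by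
    intro a b hab
    obtain ⟨hipa, hUaw, hlowa, hhigha⟩ := hpos a
    obtain ⟨hipb, hUbw, hlowb, hhighb⟩ := hpos b
    rcases hab with hlt | ⟨heq, htie⟩
    · -- insert points differ
      by_cases hsb : xS b
      · by_cases hsa : xS a
        · exact lex_trans' ((hx a).mp hsa) (hlowb (ip a) hlt)
        · rcases Nat.lt_or_ge (ip a + 1) (ip b) with hgap | hgap
          · exact lex_trans' (hhigha (ip a + 1) (by omega) (by omega))
              (hlowb (ip a + 1) hgap)
          · -- hard case : ip b = ip a + 1, ¬ xS a, xS b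
            have hwEa := hmidL a hsa
            have hEaw' := hhigha (ip b) hlt hipb
            have hwEb := hlowb (ip a) hlt
            have hUbnw : ¬ U b <+: R.drop (SA (ip a)) := by
              rcases (hmf b).2.2.2 with hG | ⟨-, hL⟩
              · exact absurd ((hx b).mp hsb) (lex_asymm' hG.1.2.2)
              · exact fun hp => absurd (hL.2 ⟨hipa, hp⟩) (by omega)
            rcases lex_trich' (U a ++ [c a]) (U b ++ [c b]) with h | h | h
            · exact h
            · -- equality is impossible
              exfalso
              rcases le_or_gt (U b).length (U a).length with hl | hl
              · have h1 : U b <+: U a ++ [c a] := by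
                  have := List.prefix_append (U b) [c b]
                  rwa [← h] at this
                exact absurd ((List.prefix_of_prefix_length_le h1
                  (List.prefix_append _ _) hl).trans hUaw) hUbnw
              · have h1 : U a ++ [c a] <+: U b ++ [c b] := h ▸ List.prefix_refl _
                have h2 : U a ++ [c a] <+: U b :=
                  List.prefix_of_prefix_length_le h1 (List.prefix_append _ _)
                    (by simp only [List.length_append, List.length_singleton]; omega)
                exact (hmf a).2.2.1 (h2.isInfix.trans (hmf b).2.1)
            · -- Lex Eb Ea is impossible
              exfalso
              rcases lex_decomp h with hp | ⟨Q, x, y, B', A', hxy, hEbeq, hEaeq⟩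
              · rcases le_or_gt (U b ++ [c b]).length (U a).length with hl | hl
                · exact (hmf b).2.2.1 ((List.prefix_of_prefix_length_le hp
                    (List.prefix_append _ _) hl).isInfix.trans (hmf a).2.1)
                · have hEq := hp.eq_of_length (le_antisymm hp.length_le
                    (by simp only [List.length_append, List.length_singleton] at hl ⊢; omega))
                  rw [hEq] at h
                  exact lex_irrefl' _ h
              · have hla : (U a).length + 1 = Q.length + (A'.length + 1) := by
                  have := congrArg List.length hEaeq
                  simpa using this
                have hQEa : Q <+: U a ++ [c a] := by
                  rw [hEaeq]; exact ⟨y :: A', rfl⟩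
                rcases eq_or_lt_of_le (show Q.length ≤ (U a).length by omega) with heq' | hlt'
                · -- divergence exactly at position |Ua|
                  have hQUa : Q = U a :=
                    (List.prefix_of_prefix_length_le hQEa (List.prefix_append _ _)
                      (le_of_eq heq')).eq_of_length heq'
                  rw [hQUa] at hEaeq hEbeq
                  have hyA : [c a] = y :: A' := List.append_cancel_left hEaeq
                  have hy : y = c a := by injection hyA with h1 h2; exact h1.symm
                  rcases le_or_gt (U b).length (U a).length with hl | hl
                  · have h1 : U b <+: U a ++ x :: B' := by
                      have := List.prefix_append (U b) [c b]
                      rwa [hEbeq] at this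
                    have h2 : U a <+: U a ++ x :: B' := ⟨x :: B', rfl⟩
                    exact absurd ((List.prefix_of_prefix_length_le h1 h2 hl).trans hUaw) hUbnw
                  · have h1 : U a ++ [x] <+: U b := by
                      refine List.prefix_of_prefix_length_le ?_ (List.prefix_append (U b) [c b])
                        (by simp only [List.length_append, List.length_singleton]; omega)
                      rw [hEbeq]
                      exact ⟨B', by simp⟩
                    obtain ⟨t, ht⟩ := h1.trans hUbw
                    have hcon : List.Lex (· < ·) (R.drop (SA (ip b))) (U a ++ [c a]) := by
                      rw [← ht]
                      have e : (U a ++ [x]) ++ t = U a ++ (x :: t) := by simp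
                      rw [e]
                      exact lex_append_left_iff'.mpr (List.Lex.rel (hy ▸ hxy))
                    exact lex_irrefl' _ (lex_trans' hEaw' hcon)
                · -- divergence strictly inside Ua
                  have h1 : Q ++ [y] <+: U a := by
                    refine List.prefix_of_prefix_length_le ?_ (List.prefix_append (U a) [c a])
                      (by simp only [List.length_append, List.length_singleton]; omega)
                    rw [hEaeq]
                    exact ⟨A', by simp⟩
                  obtain ⟨u, hu⟩ := h1.trans hUaw
                  have hcon : List.Lex (· < ·) (U b ++ [c b]) (R.drop (SA (ip a))) := by
                    rw [← hu, hEbeq]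
                    have e : (Q ++ [y]) ++ u = Q ++ (y :: u) := by simp
                    rw [e]
                    exact lex_append_left_iff'.mpr (List.Lex.rel hxy)
                  exact lex_irrefl' _ (lex_trans' hwEb hcon)
      · exact lex_trans' (hhigha (ip b) hlt hipb) (hmidL b hsb)
    · -- equal insert points : the four tie-breaking cases
      have hUbw2 : U b <+: R.drop (SA (ip a)) := by rw [heq]; exact hUbw
      rcases htie with ⟨hlen, hsa⟩ | ⟨hlen, hsb⟩ | ⟨hlen, hsa, hsb⟩ | ⟨hlen, hiff, hcab⟩
      · -- |Ua| < |Ub|, xS a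
        obtain ⟨t, ht⟩ := List.prefix_of_prefix_length_le hUaw hUbw2 hlen.le
        have htne : t ≠ [] := by
          rintro rfl
          rw [List.append_nil] at ht
          rw [ht] at hlen
          omega
        rcases t with - | ⟨th, t'⟩
        · exact absurd rfl htne
        obtain ⟨r, hr⟩ := hUbw2
        have hEaw := (hx a).mp hsa
        rw [← hr, ← ht] at hEaw
        have e : (U a ++ th :: t') ++ r = U a ++ (th :: (t' ++ r)) := by simp
        rw [e] at hEaw
        have hEaw2 := lex_append_left_iff'.mp hEaw
        have hcath : c a < th := by
          cases hEaw2 with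
          | rel h => exact h
          | cons h =>
            exfalso
            have hpre : (U a ++ [c a]) <+: U b := by
              rw [← ht]
              exact ⟨t', by simp⟩
            exact (hmf a).2.2.1 (hpre.isInfix.trans (hmf b).2.1)
        rw [← ht]
        have e2 : (U a ++ th :: t') ++ [c b] = U a ++ (th :: (t' ++ [c b])) := by simp
        rw [e2]
        exact lex_append_left_iff'.mpr (List.Lex.rel hcath)
      · -- |Ub| < |Ua|, ¬ xS b
        obtain ⟨t, ht⟩ := List.prefix_of_prefix_length_le hUbw2 hUaw hlen.le
        have htne : t ≠ [] := by
          rintro rfl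
          rw [List.append_nil] at ht
          rw [ht] at hlen
          omega
        rcases t with - | ⟨th, t'⟩
        · exact absurd rfl htne
        obtain ⟨r, hr⟩ := hUaw
        have hwEb := hmidL b hsb
        rw [← heq, ← hr, ← ht] at hwEb
        have e : (U b ++ th :: t') ++ r = U b ++ (th :: (t' ++ r)) := by simp
        rw [e] at hwEb
        have hwEb2 := lex_append_left_iff'.mp hwEb
        have hthcb : th < c b := by
          cases hwEb2 with
          | rel h => exact h
          | cons h => exact absurd h List.not_lex_nil
        rw [← ht]
        have e2 : (U b ++ th :: t') ++ [c a] = U b ++ (th :: (t' ++ [c a])) := by simp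
        rw [e2]
        exact lex_append_left_iff'.mpr (List.Lex.rel hthcb)
      · -- |Ua| = |Ub|, xS a, ¬ xS b
        have hUaUb : U a = U b :=
          (List.prefix_of_prefix_length_le hUaw hUbw2 hlen.le).eq_of_length hlen
        obtain ⟨r, hr⟩ := hUaw
        have hEaw := (hx a).mp hsa
        have hwEb := hmidL b hsb
        rw [← heq, ← hr, ← hUaUb] at hwEb
        rw [← hr] at hEaw
        have hEaw2 := lex_append_left_iff'.mp hEaw
        have hwEb2 := lex_append_left_iff'.mp hwEb
        rcases r with - | ⟨rh, r'⟩
        · cases hEaw2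
        have hca : c a < rh := by
          cases hEaw2 with
          | rel h => exact h
          | cons h =>
            exfalso
            refine hnpE a (SA (ip a)) ?_
            rw [← hr]
            exact ⟨r', by simp⟩
        have hcb : rh < c b := by
          cases hwEb2 with
          | rel h => exact h
          | cons h => exact absurd h List.not_lex_nil
        rw [← hUaUb]
        exact lex_append_left_iff'.mpr (List.Lex.rel (lt_trans hca hcb))
      · -- |Ua| = |Ub|, same side, c a < c b
        have hUaUb : U a = U b :=
          (List.prefix_of_prefix_length_le hUaw hUbw2 hlen.le).eq_of_length hlen
        rw [← hUaUb]
        exact lex_append_left_iff'.mpr (List.Lex.rel hcab)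
  refine ⟨?_, ?_, ?_⟩
  · -- irreflexivity
    intro a h
    rcases h with h | ⟨-, h⟩
    · omega
    · rcases h with ⟨h, -⟩ | ⟨h, -⟩ | ⟨-, h, h'⟩ | ⟨-, -, h⟩
      · omega
      · omega
      · exact h' h
      · exact lt_irrefl _ h
  · -- transitivity
    intro a b d hab hbd
    rcases hab with h1 | ⟨e1, t1⟩
    · rcases hbd with h2 | ⟨e2, t2⟩
      · exact Or.inl (lt_trans h1 h2)
      · exact Or.inl (by omega)
    · rcases hbd with h2 | ⟨e2, t2⟩
      · exact Or.inl (by omega)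
      · refine Or.inr ⟨e1.trans e2, ?_⟩
        rcases t1 with ⟨l1, s1⟩ | ⟨l1, s1⟩ | ⟨l1, s1, s1'⟩ | ⟨l1, s1, s1'⟩ <;>
          rcases t2 with ⟨l2, s2⟩ | ⟨l2, s2⟩ | ⟨l2, s2, s2'⟩ | ⟨l2, s2, s2'⟩
        · exact Or.inl ⟨by omega, s1⟩
        · rcases lt_trichotomy (U a).length (U d).length with h3 | h3 | h3
          · exact Or.inl ⟨h3, s1⟩
          · exact Or.inr (Or.inr (Or.inl ⟨h3, s1, s2⟩))
          · exact Or.inr (Or.inl ⟨h3, s2⟩)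
        · exact Or.inl ⟨by omega, s1⟩
        · exact Or.inl ⟨by omega, s1⟩
        · exact absurd s2 s1
        · exact Or.inr (Or.inl ⟨by omega, s2⟩)
        · exact absurd s2 s1
        · exact Or.inr (Or.inl ⟨by omega, fun h => s1 (s2.mpr h)⟩)
        · exact absurd s2 s1'
        · exact Or.inr (Or.inl ⟨by omega, s2⟩)
        · exact absurd s2 s1'
        · exact Or.inr (Or.inr (Or.inl ⟨by omega, s1, fun h => s1' (s2.mpr h)⟩))
        · exact Or.inl ⟨by omega, s1.mpr s2⟩
        · exact Or.inr (Or.inl ⟨by omega, s2⟩)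
        · exact Or.inr (Or.inr (Or.inl ⟨by omega, s1.mpr s2, s2'⟩))
        · exact Or.inr (Or.inr (Or.inr ⟨by omega, s1.trans s2, lt_trans s1' s2'⟩))
  · -- lexicographic refinement
    intro a b hab
    obtain ⟨Va, hA⟩ := (hmf a).1
    obtain ⟨Vb, hB⟩ := (hmf b).1
    rw [hA, hB]
    have e1 : U a ++ c a :: Va = (U a ++ [c a]) ++ Va := by simp
    have e2 : U b ++ c b :: Vb = (U b ++ [c b]) ++ Vb := by simp
    rw [e1, e2]
    have hlex := hmain a b hab
    refine keyE hlex ?_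
    intro hpre
    rcases le_or_gt (U a ++ [c a]).length (U b).length with hl | hl
    · exact (hmf a).2.2.1 ((List.prefix_of_prefix_length_le hpre
        (List.prefix_append _ _) hl).isInfix.trans (hmf b).2.1)
    · have hEq : U a ++ [c a] = U b ++ [c b] := hpre.eq_of_length
        (le_antisymm hpre.length_le
          (by simp only [List.length_append, List.length_singleton] at hl ⊢; omega))
      rw [hEq] at hlex
      exact lex_irrefl' _ hlex
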